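/- Let (R, m) be a commutative noetherian local ring, I an ideal of R, and M ⊆ X an extension of R-modules with Ext^1_R(R/I, X) = 0. Then: (a) γ_I(M) = I•(M :_X I); (b) M is I-excellent if and only if ((I•M) :_X I) = (M :_X I). -/

import Mathlib

open CategoryTheory

/-- For a submodule `Y` of `X` and an ideal `I`, the submodule `(Y :_X I) = {u ∈ X | I•u ⊆ Y}`. -/
def colonSub {R : Type u} [CommRing R] {X : Type v} [AddCommGroup X] [Module R X]
    (Y : Submodule R X) (I : Ideal R) : Submodule R X where
  carrier := {u | ∀ r ∈ I, r • u ∈ Y}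
  add_mem' := by
    intro a b ha hb r hr
    rw [smul_add]
    exact Y.add_mem (ha r hr) (hb r hr)
  zero_mem' := by
    intro r hr
    simp
  smul_mem' := by
    intro c u hu r hr
    rw [smul_comm]
    exact Y.smul_mem c (hu r hr)

noncomputable section
open CategoryTheory.Limits
universe u
variable {R : Type u} [CommRing R] (I : Ideal R)

def pi0 : ModuleCat.of R R ⟶ ModuleCat.of R (R ⧸ I) := ModuleCat.ofHom I.mkQ

instance : Epi (pi0 I) := (ModuleCat.epi_iff_surjective _).2 (Submodule.mkQ_surjective I)

instance : Projective (ModuleCat.of R R) :=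
  ModuleCat.projective_of_free (Module.Basis.singleton PUnit.{u+1} R)

lemma proj_d_comp_self {X₀ X₁ : ModuleCat.{u} R} (f : X₁ ⟶ X₀) : Projective.d f ≫ f = 0 :=
  (Category.assoc (Projective.π (kernel f)) (kernel.ι f) f).trans (by rw [kernel.condition, comp_zero]; rfl)

def resC : ChainComplex (ModuleCat.{u} R) ℕ :=
  ChainComplex.mk' (ModuleCat.of R R) (Projective.syzygies (pi0 I))
    (Projective.d (pi0 I)) (fun f => ⟨_, Projective.d f, proj_d_comp_self f⟩)

lemma resC_d_1_0 : (resC I).d 1 0 = Projective.d (pi0 I) := by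
  simp [resC]

lemma resC_exactAt_succ (n : ℕ) : (resC I).ExactAt (n + 1) := by
  rw [HomologicalComplex.exactAt_iff' _ (n + 1 + 1) (n + 1) n (by simp) (by simp)]
  refine (ShortComplex.exact_iff_of_iso ?_).1 (exact_d_f ((resC I).d (n + 1) n))
  have hd := ChainComplex.mk'_d (ModuleCat.of R R) (Projective.syzygies (pi0 I))
    (Projective.d (pi0 I)) (fun f => ⟨_, Projective.d f, proj_d_comp_self f⟩) n
  exact ShortComplex.isoMk (ChainComplex.mk'XIso (ModuleCat.of R R) (Projective.syzygies (pi0 I))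
    (Projective.d (pi0 I)) (fun f => ⟨_, Projective.d f, proj_d_comp_self f⟩) n).symm (Iso.refl _) (Iso.refl _)
    (by exact ((Iso.inv_comp_eq _).2 hd).trans (Category.comp_id _).symm)
    (by exact (Category.id_comp _).trans (Category.comp_id _).symm)

instance (n : ℕ) : Projective ((resC I).X n) := by
  obtain (_ | _ | _ | n) := n
  · exact inferInstanceAs (Projective (ModuleCat.of R R))
  all_goals apply Projective.projective_over

def resP : ProjectiveResolution (ModuleCat.of R (R ⧸ I)) where
  complex := resC I
  π := (ChainComplex.toSingle₀Equiv _ _).symm ⟨pi0 I, by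
        rw [resC_d_1_0]
        exact (Category.assoc (Projective.π (kernel (pi0 I))) (kernel.ι (pi0 I)) (pi0 I)).trans
          (by rw [kernel.condition, comp_zero]; rfl)⟩
  quasiIso := ⟨fun n => by
    cases n
    · rw [ChainComplex.quasiIsoAt₀_iff, ShortComplex.quasiIso_iff_of_zeros']
      · refine (ShortComplex.exact_and_epi_g_iff_of_iso ?_).2
          ⟨exact_d_f (pi0 I), by dsimp; infer_instance⟩
        exact ShortComplex.isoMk (Iso.refl _) (Iso.refl _) (Iso.refl _)
          (by exact (Category.id_comp _).trans (Category.comp_id _).symm)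
          (by exact (Category.id_comp _).trans ((ChainComplex.toSingle₀Equiv_symm_apply_f_zero (C := resC I) (pi0 I) _).symm.trans (Category.comp_id _).symm))
      all_goals rfl
    · rw [quasiIsoAt_iff_exactAt']
      · apply resC_exactAt_succ
      · apply ChainComplex.exactAt_succ_single_obj⟩

theorem exists_extension {X : Type u} [AddCommGroup X] [Module R X]
    (hX : Subsingleton (((Ext R (ModuleCat.{u} R) 1).obj
        (Opposite.op (ModuleCat.of R (R ⧸ I)))).obj (ModuleCat.of R X)))
    (f : ↥I →ₗ[R] X) : ∃ m : X, ∀ i (hi : i ∈ I), f ⟨i, hi⟩ = i • m := by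
  set K := ((resP I).complex.linearYonedaObj R (ModuleCat.of R X)) with hK
  have hz : IsZero (K.homology 1) :=
    IsZero.of_iso (ModuleCat.isZero_of_subsingleton _) ((resP I).isoExt 1 (ModuleCat.of R X)).symm
  have hexact : (K.sc' 0 1 2).Exact :=
    (HomologicalComplex.exactAt_iff' K 0 1 2 (by simp) (by simp)).1
      ((HomologicalComplex.exactAt_iff_isZero_homology _ _).2 hz)
  rw [ShortComplex.moduleCat_exact_iff] at hexact
  have hker : LinearMap.ker (pi0 I).hom = I := Submodule.ker_mkQ I
  let g0 : ↥(LinearMap.ker (pi0 I).hom) →ₗ[R] X :=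
    f ∘ₗ (LinearEquiv.ofEq _ _ hker).toLinearMap
  let φ : (resC I).X 1 ⟶ ModuleCat.of R X :=
    Projective.π (kernel (pi0 I)) ≫ (ModuleCat.kernelIsoKer (pi0 I)).hom ≫ ModuleCat.ofHom g0
  have hd21 : (resC I).d 2 1 ≫ Projective.π (kernel (pi0 I)) = 0 := by
    rw [← cancel_mono (kernel.ι (pi0 I))]
    have := (resC I).d_comp_d 2 1 0
    rw [resC_d_1_0] at this
    exact (Category.assoc _ _ _).trans (this.trans zero_comp.symm)
  have hcycle : (K.sc' 0 1 2).g φ = 0 := by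
    show (K.d 1 2) φ = 0
    have : (K.d 1 2) φ = (resC I).d 2 1 ≫ φ := by
      rfl
    rw [this]
    rw [show φ = Projective.π (kernel (pi0 I)) ≫ ((ModuleCat.kernelIsoKer (pi0 I)).hom ≫ ModuleCat.ofHom g0) from rfl]
    exact (Category.assoc _ _ _).symm.trans ((congrArg (· ≫ _) hd21).trans zero_comp)
  obtain ⟨g, hg⟩ := hexact φ hcycle
  have hg' : (resC I).d 1 0 ≫ g = φ := hg
  rw [resC_d_1_0] at hg'
  have h2 : kernel.ι (pi0 I) ≫ g = (ModuleCat.kernelIsoKer (pi0 I)).hom ≫ ModuleCat.ofHom g0 := by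
    rw [← cancel_epi (Projective.π (kernel (pi0 I)))]
    exact (Category.assoc _ _ _).symm.trans hg'
  let g' : ModuleCat.of R R ⟶ ModuleCat.of R X := g
  refine ⟨g' (1 : R), fun i hi => ?_⟩
  have hu : i ∈ LinearMap.ker (pi0 I).hom := by rw [hker]; exact hi
  set k := (ModuleCat.kernelIsoKer (pi0 I)).inv ⟨i, hu⟩ with hkdef
  have e1 : kernel.ι (pi0 I) k = i :=
    ModuleCat.kernelIsoKer_inv_kernel_ι_apply (pi0 I) ⟨i, hu⟩
  have e2 : (ModuleCat.kernelIsoKer (pi0 I)).hom k = ⟨i, hu⟩ := by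
    rw [hkdef]
    exact ConcreteCategory.congr_hom (ModuleCat.kernelIsoKer (pi0 I)).inv_hom_id ⟨i, hu⟩
  have h4 : g' ((kernel.ι (pi0 I)) k) = g0 ((ModuleCat.kernelIsoKer (pi0 I)).hom k) :=
    ConcreteCategory.congr_hom h2 k
  rw [e1, e2] at h4
  have h5 : g0 (⟨i, hu⟩ : LinearMap.ker (pi0 I).hom) = f ⟨i, hi⟩ := rfl
  have h6 : g' i = i • g' (1 : R) := by
    conv_lhs => rw [show i = i • (1 : R) by simp]
    exact map_smul g'.hom i (1 : R)
  rw [← h6, ← h5, ← h4]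

end

/-- Proposition 1.9: Let `M ⊆ X` be an extension of `R`-modules with `Ext¹_R(R/I, X) = 0`.
Then (a) `γ_I(M) = I•(M :_X I)`, where `γ_I(M)` is the trace of `I` in `M` viewed inside `X`;
(b) `M` is `I`-excellent (`I•M = γ_I(M)`) iff `((I•M) :_X I) = (M :_X I)`. -/
theorem trace_eq_smul_colon {R : Type u} [CommRing R] [IsNoetherianRing R] [IsLocalRing R]
    (I : Ideal R) (X : Type u) [AddCommGroup X] [Module R X] (M : Submodule R X)
    (hX : Subsingleton (((Ext R (ModuleCat.{u} R) 1).obj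
        (Opposite.op (ModuleCat.of R (R ⧸ I)))).obj (ModuleCat.of R X))) :
    ((⨆ f : I →ₗ[R] M, Submodule.map M.subtype (LinearMap.range f)) = I • colonSub M I) ∧
    ((I • M = ⨆ f : I →ₗ[R] M, Submodule.map M.subtype (LinearMap.range f)) ↔
      colonSub (I • M) I = colonSub M I) := by
  have key : ∀ f : ↥I →ₗ[R] ↥M, Submodule.map M.subtype (LinearMap.range f) ≤ I • colonSub M I := by
    intro f
    obtain ⟨m, hm⟩ := exists_extension I hX (M.subtype ∘ₗ f)
    have hmem : m ∈ colonSub M I := by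
      intro r hr
      have := hm r hr
      simp only [LinearMap.comp_apply] at this
      rw [← this]
      exact (f ⟨r, hr⟩).2
    rintro x ⟨y, ⟨⟨i, hi⟩, rfl⟩, rfl⟩
    have h1 : M.subtype (f ⟨i, hi⟩) = i • m := hm i hi
    rw [h1]
    exact Submodule.smul_mem_smul hi hmem
  have hBA : I • colonSub M I ≤ ⨆ f : I →ₗ[R] M, Submodule.map M.subtype (LinearMap.range f) := by
    rw [Submodule.smul_le]
    intro r hr u hu
    let fu : ↥I →ₗ[R] ↥M :=
      { toFun := fun i => ⟨i.1 • u, hu i.1 i.2⟩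
        map_add' := by intro a b; ext; simp [add_smul]
        map_smul' := by intro c a; ext; simp [mul_smul] }
    have h2 : r • u = M.subtype (fu ⟨r, hr⟩) := rfl
    rw [h2]
    exact le_iSup (fun f : ↥I →ₗ[R] ↥M => Submodule.map M.subtype (LinearMap.range f)) fu
      ⟨fu ⟨r, hr⟩, ⟨⟨r, hr⟩, rfl⟩, rfl⟩
  have ha : (⨆ f : I →ₗ[R] M, Submodule.map M.subtype (LinearMap.range f)) = I • colonSub M I :=
    le_antisymm (iSup_le key) hBA
  refine ⟨ha, ?_⟩
  rw [ha]
  have hIM : I • M ≤ M := Submodule.smul_le.mpr fun r _ m hm => M.smul_mem r hm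
  constructor
  · intro h
    apply le_antisymm
    · intro u hu r hr
      exact hIM (hu r hr)
    · intro u hu r hr
      rw [h]
      exact Submodule.smul_mem_smul hr hu
  · intro hc
    apply le_antisymm
    · exact smul_mono_right _ (fun m hm r hr => M.smul_mem r hm)
    · rw [← hc, Submodule.smul_le]
      intro r hr u hu
      exact hu r hr
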